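/- arXiv:1406.4428 — 2 statements merged into one kernel-verified Lean document; each statement's English description precedes it below -/
import Mathlib

section
/- Let g₁, g₂ : ℝ → ℝ be continuous 2π-periodic functions with ∫₀^{2π} g₁(t) dt = ∫₀^{2π} g₂(t) dt = 0, regarded as functions on S¹, and let F₁ : ℝ → ℝ be defined by F₁(t) = (1/2π) ∫₀^t g₁(s) ds (which is 2π-periodic since g₁ has zero mean, hence defines a function on S¹). Then ∫_{(S¹)³} e(θ₀,θ₁,θ₂) g₁(θ₁) g₂(θ₂) dθ₀ dθ₁ dθ₂ = 2 ∫_{S¹} F₁(θ) g₂(θ) dθ = (1/π) ∫₀^{2π} F₁(t) g₂(t) dt. -/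
open MeasureTheory Real
open scoped Real

noncomputable section

instance : Fact (0 < 2 * π) := ⟨by positivity⟩

/-- The circle `S¹ = ℝ/2πℤ`. -/
abbrev Circle2pi := AddCircle (2 * π)

/-- The orientation cocycle `e` on the circle: `1` on strictly positively
cyclically ordered triples, `-1` otherwise. -/
def eCocycle (a b c : Circle2pi) : ℝ :=
  letI := Classical.dec (sbtw a b c)
  if sbtw a b c then 1 else -1

/-- The normalized Haar probability measure on the circle. -/
abbrev circleMeasure : Measure Circle2pi := AddCircle.haarAddCircle

/-- The `n`-torus `𝕋ⁿ`. -/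
abbrev Torus (n : ℕ) := Fin n → Circle2pi

/-- The product probability measure on the `n`-torus. -/
abbrev torusMeasure (n : ℕ) : Measure (Torus n) := Measure.pi fun _ => circleMeasure

/-- The cocycle `C` on `(𝕋ⁿ)^(2n+1)` (indices `0, …, 2n`; the `i`-th Euler class,
for `i = 0, …, n-1` (0-indexed), uses positions `2i, 2i+1, 2i+2`). -/
def Ccocycle (n : ℕ) (θ : Fin (2 * n + 1) → Torus n) : ℝ :=
  (1 / (2 * n + 1).factorial : ℝ) *
    ∑ σ : Equiv.Perm (Fin (2 * n + 1)), ((Equiv.Perm.sign σ : ℤ) : ℝ) *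
      ∏ i : Fin n,
        eCocycle (θ (σ ⟨2 * i.1, by have := i.2; omega⟩) i)
          (θ (σ ⟨2 * i.1 + 1, by have := i.2; omega⟩) i)
          (θ (σ ⟨2 * i.1 + 2, by have := i.2; omega⟩) i)

namespace EulerAux

open Set

/-- Canonical representative in `[0, 2π)`. -/
noncomputable def rC (q : Circle2pi) : ℝ := (AddCircle.equivIco (2 * π) 0 q : ℝ)

/-- Canonical representative in `(0, 2π]`. -/
noncomputable def qC (q : Circle2pi) : ℝ :=
  (QuotientAddGroup.equivIocMod Real.two_pi_pos 0 q : ℝ)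

lemma rC_coe (x : ℝ) : rC (x : Circle2pi) = toIcoMod Real.two_pi_pos 0 x := rfl

lemma measurable_rC : Measurable rC :=
  measurable_subtype_coe.comp (AddCircle.measurableEquivIco (2 * π) 0).measurable

lemma coe_rC (q : Circle2pi) : ((rC q : ℝ) : Circle2pi) = q := by
  have := (AddCircle.equivIco (2 * π) 0).symm_apply_apply q
  rwa [AddCircle.equivIco, QuotientAddGroup.equivIcoMod_symm_apply] at this

lemma coe_qC (q : Circle2pi) : ((qC q : ℝ) : Circle2pi) = q := by
  have := (QuotientAddGroup.equivIocMod Real.two_pi_pos 0).symm_apply_apply q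
  rwa [QuotientAddGroup.equivIocMod_symm_apply] at this

lemma rC_mem (q : Circle2pi) : rC q ∈ Ico (0:ℝ) (2 * π) := by
  simpa [rC] using (AddCircle.equivIco (2 * π) 0 q).2

lemma qC_mem (q : Circle2pi) : qC q ∈ Ioc (0:ℝ) (2 * π) := by
  simpa [qC] using (QuotientAddGroup.equivIocMod Real.two_pi_pos 0 q).2

lemma rC_zero : rC 0 = 0 := by
  have h0 : ((0:ℝ) : Circle2pi) = 0 := rfl
  rw [← h0, rC_coe]
  exact (toIcoMod_eq_self _).mpr ⟨le_rfl, by rw [zero_add]; exact Real.two_pi_pos⟩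

lemma rC_eq_zero_iff {q : Circle2pi} : rC q = 0 ↔ q = 0 :=
  ⟨fun h => by rw [← coe_rC q, h]; rfl, fun h => by rw [h, rC_zero]⟩

lemma rC_pos {q : Circle2pi} (hq : q ≠ 0) : 0 < rC q :=
  lt_of_le_of_ne (rC_mem q).1 (fun h => hq (rC_eq_zero_iff.mp h.symm))

lemma coe_eq_zero_iff' {x : ℝ} : (x : Circle2pi) = 0 ↔ ∃ k : ℤ, x = (k : ℝ) * (2 * π) := by
  rw [AddCircle.coe_eq_zero_iff]
  constructor
  · rintro ⟨n, hn⟩; exact ⟨n, by rw [← hn, zsmul_eq_mul]⟩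
  · rintro ⟨k, hk⟩; exact ⟨k, by rw [hk, zsmul_eq_mul]⟩

lemma rC_add_rC_neg {q : Circle2pi} (hq : q ≠ 0) : rC q + rC (-q) = 2 * π := by
  obtain ⟨k, hk⟩ : ∃ k : ℤ, rC q + rC (-q) = (k : ℝ) * (2 * π) := by
    apply coe_eq_zero_iff'.mp
    rw [AddCircle.coe_add, coe_rC, coe_rC, add_neg_cancel]
  have h1 := rC_pos hq
  have h2 := rC_pos (neg_ne_zero.mpr hq)
  have h3 := (rC_mem q).2
  have h4 := (rC_mem (-q)).2
  have hπ := Real.pi_pos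
  have hk1 : (0:ℝ) < (k:ℝ) := by nlinarith
  have hk2 : (k:ℝ) < 2 := by nlinarith
  have : k = 1 := by
    have h1' : (0:ℤ) < k := by exact_mod_cast hk1
    have h2' : (k:ℤ) < 2 := by exact_mod_cast hk2
    omega
  rw [hk, this]; push_cast; ring

lemma qC_eq_rC {q : Circle2pi} (hq : q ≠ 0) : qC q = rC q := by
  obtain ⟨k, hk⟩ : ∃ k : ℤ, qC q - rC q = (k : ℝ) * (2 * π) := by
    apply coe_eq_zero_iff'.mp
    rw [AddCircle.coe_sub, coe_rC, coe_qC, sub_self]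
  have h1 := qC_mem q
  have h2 := rC_mem q
  have h3 := rC_pos hq
  have hπ := Real.pi_pos
  have hk1 : (-1:ℝ) < (k:ℝ) := by nlinarith [h1.1, h2.2]
  have hk2 : (k:ℝ) < 1 := by nlinarith [h1.2, h3]
  have : k = 0 := by
    have h1' : (-1:ℤ) < k := by exact_mod_cast hk1
    have h2' : (k:ℤ) < 1 := by exact_mod_cast hk2
    omega
  rw [this] at hk; push_cast at hk; linarith

lemma btw_iff' (a b c : Circle2pi) : Btw.btw a b c ↔ rC (b - a) ≤ qC (c - a) := Iff.rfl

/-- The key pointwise formula for the orientation cocycle off the degenerate set. -/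
lemma eCocycle_eq {a b c : Circle2pi} (hab : a ≠ b) (hbc : b ≠ c) (hca : c ≠ a) :
    eCocycle a b c = 3 - (rC (b - a) + rC (c - b) + rC (a - c)) / π := by
  have hπ := Real.pi_pos
  have hu : b - a ≠ 0 := sub_ne_zero.mpr (Ne.symm hab)
  have hv : c - b ≠ 0 := sub_ne_zero.mpr (Ne.symm hbc)
  have hw : a - c ≠ 0 := sub_ne_zero.mpr (Ne.symm hca)
  set A := rC (b - a) with hA
  set B := rC (c - b) with hB
  set C := rC (a - c) with hC
  have hApos : 0 < A := rC_pos hu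
  have hBpos : 0 < B := rC_pos hv
  have hCpos : 0 < C := rC_pos hw
  have hAlt : A < 2 * π := (rC_mem _).2
  have hBlt : B < 2 * π := (rC_mem _).2
  have hClt : C < 2 * π := (rC_mem _).2
  -- the sum is 2π or 4π
  have hS : A + B + C = 2 * π ∨ A + B + C = 4 * π := by
    obtain ⟨k, hk⟩ : ∃ k : ℤ, A + B + C = (k : ℝ) * (2 * π) := by
      apply coe_eq_zero_iff'.mp
      rw [AddCircle.coe_add, AddCircle.coe_add, hA, hB, hC, coe_rC, coe_rC, coe_rC]
      abel
    have hk1 : (0:ℝ) < (k:ℝ) := by nlinarith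
    have hk2 : (k:ℝ) < 3 := by nlinarith
    have h1' : (0:ℤ) < k := by exact_mod_cast hk1
    have h2' : (k:ℤ) < 3 := by exact_mod_cast hk2
    interval_cases k
    · left; rw [hk]; push_cast; ring
    · right; rw [hk]; push_cast; ring
  -- the first betweenness condition
  have hbtw1 : Btw.btw a b c ↔ A + C ≤ 2 * π := by
    rw [btw_iff']
    have hca' : c - a ≠ 0 := by
      rw [show c - a = -(a - c) by abel]; exact neg_ne_zero.mpr hw
    rw [qC_eq_rC hca', show c - a = -(a - c) by abel]
    have h := rC_add_rC_neg hw
    constructor <;> intro h' <;> [skip; skip] <;> linarith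
  -- the reverse betweenness condition
  have hbtw2 : Btw.btw c b a ↔ 2 * π ≤ B + C := by
    rw [btw_iff']
    have hac' : a - c ≠ 0 := hw
    rw [qC_eq_rC hac']
    rw [show b - c = -(c - b) by abel]
    have h := rC_add_rC_neg hv
    constructor <;> intro h' <;> linarith
  have hsbtw : sbtw a b c ↔ (A + C ≤ 2 * π ∧ ¬ (2 * π ≤ B + C)) := by
    rw [sbtw_iff_btw_not_btw, hbtw1, hbtw2]
  rcases hS with h | h
  · have hs : sbtw a b c := hsbtw.mpr ⟨by linarith, by push_neg; linarith⟩
    rw [eCocycle, if_pos hs, h]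
    field_simp
    ring
  · have hs : ¬ sbtw a b c := by
      rw [hsbtw]; push_neg; intro h'; linarith
    rw [eCocycle, if_neg hs, h]
    field_simp
    ring


lemma circle_null_singleton (x : Circle2pi) : circleMeasure {x} = 0 := by
  have hvol : (volume : Measure Circle2pi) {x} = 0 := by
    have h := AddCircle.volume_closedBall (T := 2 * π) (x := x) 0
    rw [Metric.closedBall_zero] at h
    rw [h, mul_zero, min_eq_right Real.two_pi_pos.le]
    simp
  have hv := AddCircle.volume_eq_smul_haarAddCircle (T := 2 * π)
  rw [hv, Measure.smul_apply, smul_eq_mul] at hvol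
  rcases mul_eq_zero.mp hvol with h | h
  · exact absurd h (by simp [Real.pi_pos])
  · exact h

lemma circle_noAtoms : NoAtoms circleMeasure := ⟨circle_null_singleton⟩

lemma null_diag :
    (circleMeasure.prod circleMeasure) {q : Circle2pi × Circle2pi | q.1 = q.2} = 0 := by
  apply (Measure.measure_prod_null
    (measurableSet_eq_fun measurable_fst measurable_snd)).mpr
  refine Filter.Eventually.of_forall fun b => ?_
  show circleMeasure (Prod.mk b ⁻¹' {q : Circle2pi × Circle2pi | q.1 = q.2}) = 0
  have : (Prod.mk b ⁻¹' {q : Circle2pi × Circle2pi | q.1 = q.2}) = {b} := by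
    ext c; simp [eq_comm]
  rw [this, circle_null_singleton]

lemma null_deg :
    (circleMeasure.prod (circleMeasure.prod circleMeasure))
      {p : Circle2pi × Circle2pi × Circle2pi |
        p.1 = p.2.1 ∨ p.2.1 = p.2.2 ∨ p.2.2 = p.1} = 0 := by
  have h1 : (circleMeasure.prod (circleMeasure.prod circleMeasure))
      {p : Circle2pi × Circle2pi × Circle2pi | p.1 = p.2.1} = 0 := by
    apply (Measure.measure_prod_null
      (measurableSet_eq_fun measurable_fst (measurable_fst.comp measurable_snd))).mpr
    refine Filter.Eventually.of_forall fun a => ?_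
    show (circleMeasure.prod circleMeasure)
      (Prod.mk a ⁻¹' {p : Circle2pi × Circle2pi × Circle2pi | p.1 = p.2.1}) = 0
    have : (Prod.mk a ⁻¹' {p : Circle2pi × Circle2pi × Circle2pi | p.1 = p.2.1})
        = ({a} : Set Circle2pi) ×ˢ (Set.univ : Set Circle2pi) := by
      ext ⟨q1, q2⟩; simp [Set.mem_prod, eq_comm]
    rw [this, Measure.prod_prod, circle_null_singleton, zero_mul]
  have h2 : (circleMeasure.prod (circleMeasure.prod circleMeasure))
      {p : Circle2pi × Circle2pi × Circle2pi | p.2.1 = p.2.2} = 0 := by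
    apply (Measure.measure_prod_null
      (measurableSet_eq_fun (measurable_fst.comp measurable_snd)
        (measurable_snd.comp measurable_snd))).mpr
    refine Filter.Eventually.of_forall fun a => ?_
    show (circleMeasure.prod circleMeasure)
      (Prod.mk a ⁻¹' {p : Circle2pi × Circle2pi × Circle2pi | p.2.1 = p.2.2}) = 0
    have : (Prod.mk a ⁻¹' {p : Circle2pi × Circle2pi × Circle2pi | p.2.1 = p.2.2})
        = {q : Circle2pi × Circle2pi | q.1 = q.2} := by ext ⟨q1, q2⟩; simp
    rw [this, null_diag]
  have h3 : (circleMeasure.prod (circleMeasure.prod circleMeasure))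
      {p : Circle2pi × Circle2pi × Circle2pi | p.2.2 = p.1} = 0 := by
    apply (Measure.measure_prod_null
      (measurableSet_eq_fun (measurable_snd.comp measurable_snd) measurable_fst)).mpr
    refine Filter.Eventually.of_forall fun a => ?_
    show (circleMeasure.prod circleMeasure)
      (Prod.mk a ⁻¹' {p : Circle2pi × Circle2pi × Circle2pi | p.2.2 = p.1}) = 0
    have : (Prod.mk a ⁻¹' {p : Circle2pi × Circle2pi × Circle2pi | p.2.2 = p.1})
        = (Set.univ : Set Circle2pi) ×ˢ ({a} : Set Circle2pi) := by
      ext ⟨q1, q2⟩; simp [Set.mem_prod, eq_comm]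
    rw [this, Measure.prod_prod, circle_null_singleton, mul_zero]
  have hsub : {p : Circle2pi × Circle2pi × Circle2pi |
        p.1 = p.2.1 ∨ p.2.1 = p.2.2 ∨ p.2.2 = p.1}
      ⊆ {p : Circle2pi × Circle2pi × Circle2pi | p.1 = p.2.1}
        ∪ ({p : Circle2pi × Circle2pi × Circle2pi | p.2.1 = p.2.2}
          ∪ {p : Circle2pi × Circle2pi × Circle2pi | p.2.2 = p.1}) := by
    intro p hp
    rcases hp with h | h | h
    · exact Or.inl h
    · exact Or.inr (Or.inl h)
    · exact Or.inr (Or.inr h)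
  exact measure_mono_null hsub
    (measure_union_null h1 (measure_union_null h2 h3))

lemma integral_circle (f : Circle2pi → ℝ) :
    ∫ q, f q ∂circleMeasure = (1 / (2 * π)) * ∫ t in (0:ℝ)..(2 * π), f (t : Circle2pi) := by
  have h1 := AddCircle.intervalIntegral_preimage (2 * π) 0 f
  rw [zero_add] at h1
  rw [h1, AddCircle.volume_eq_smul_haarAddCircle, integral_smul_measure,
    ENNReal.toReal_ofReal Real.two_pi_pos.le, smul_eq_mul]
  have hπ := Real.pi_ne_zero
  field_simp

lemma integrable_bdd {α : Type*} [MeasurableSpace α] {μ : Measure α} [IsFiniteMeasure μ]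
    {f : α → ℝ} {C : ℝ} (hf : Measurable f) (h : ∀ x, |f x| ≤ C) : Integrable f μ :=
  ⟨hf.aestronglyMeasurable, HasFiniteIntegral.of_bounded (C := C)
    (Filter.Eventually.of_forall (by simpa [Real.norm_eq_abs] using h))⟩

lemma integral_triple_of_snd (F : Circle2pi × Circle2pi → ℝ)
    (hF : AEStronglyMeasurable F (circleMeasure.prod circleMeasure)) :
    ∫ p : Circle2pi × Circle2pi × Circle2pi, F p.2
        ∂(circleMeasure.prod (circleMeasure.prod circleMeasure))
      = ∫ q, F q ∂(circleMeasure.prod circleMeasure) := by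
  have hmap : Measure.map Prod.snd (circleMeasure.prod (circleMeasure.prod circleMeasure))
      = circleMeasure.prod circleMeasure := by
    rw [Measure.map_snd_prod]; simp
  rw [show ∫ q, F q ∂(circleMeasure.prod circleMeasure)
      = ∫ q, F q ∂(Measure.map Prod.snd
          (circleMeasure.prod (circleMeasure.prod circleMeasure))) by rw [hmap]]
  exact (integral_map measurable_snd.aemeasurable (by rw [hmap]; exact hF)).symm

end EulerAux

/-- alternative expression of the form via primitives. -/
theorem euler_primitive_formula (g₁ g₂ : ℝ → ℝ)
    (hc₁ : Continuous g₁) (hc₂ : Continuous g₂)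
    (hp₁ : Function.Periodic g₁ (2 * π)) (hp₂ : Function.Periodic g₂ (2 * π))
    (hz₁ : ∫ t in (0 : ℝ)..(2 * π), g₁ t = 0) (hz₂ : ∫ t in (0 : ℝ)..(2 * π), g₂ t = 0)
    -- `G₁`, `G₂`, `F₁` are `g₁`, `g₂` and the primitive `F₁` regarded as functions on `S¹`
    (G₁ G₂ F₁ : Circle2pi → ℝ)
    (hG₁ : ∀ t : ℝ, G₁ (t : Circle2pi) = g₁ t) (hG₂ : ∀ t : ℝ, G₂ (t : Circle2pi) = g₂ t)
    (hF₁ : ∀ t : ℝ, F₁ (t : Circle2pi) = (1 / (2 * π)) * ∫ s in (0 : ℝ)..t, g₁ s) :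
    (∫ p : Circle2pi × Circle2pi × Circle2pi,
        eCocycle p.1 p.2.1 p.2.2 * G₁ p.2.1 * G₂ p.2.2
      ∂(circleMeasure.prod (circleMeasure.prod circleMeasure))
      = 2 * ∫ θ, F₁ θ * G₂ θ ∂circleMeasure) ∧
    (2 * ∫ θ, F₁ θ * G₂ θ ∂circleMeasure
      = (1 / π) * ∫ t in (0 : ℝ)..(2 * π),
          ((1 / (2 * π)) * ∫ s in (0 : ℝ)..t, g₁ s) * g₂ t) := by
  classical
  open EulerAux in
  have hπ : (π : ℝ) ≠ 0 := Real.pi_ne_zero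
  have hπpos := Real.pi_pos
  -- Part 2
  have key2 : 2 * ∫ θ, F₁ θ * G₂ θ ∂circleMeasure
      = (1 / π) * ∫ t in (0 : ℝ)..(2 * π),
          ((1 / (2 * π)) * ∫ s in (0 : ℝ)..t, g₁ s) * g₂ t := by
    rw [EulerAux.integral_circle (fun θ => F₁ θ * G₂ θ),
      intervalIntegral.integral_congr
        (g := fun t => ((1 / (2 * π)) * ∫ s in (0 : ℝ)..t, g₁ s) * g₂ t)
        (fun t _ => by rw [hF₁, hG₂])]
    ring
  refine ⟨?_, key2⟩
  -- common value
  have hval2 : (1 / π) * ∫ t in (0 : ℝ)..(2 * π),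
        ((1 / (2 * π)) * ∫ s in (0 : ℝ)..t, g₁ s) * g₂ t
      = 1 / (2 * π ^ 2) * ∫ z in (0 : ℝ)..(2 * π), (∫ s in (0 : ℝ)..z, g₁ s) * g₂ z := by
    rw [intervalIntegral.integral_congr
        (g := fun t => (1 / (2 * π)) * ((∫ s in (0 : ℝ)..t, g₁ s) * g₂ t))
        (fun t _ => by ring),
      intervalIntegral.integral_const_mul,
      show (1:ℝ) / (2 * π ^ 2) = (1 / π) * (1 / (2 * π)) by field_simp, mul_assoc]
  -- bounds and measurability of G₁, G₂
  obtain ⟨C₁, hC₁⟩ := isCompact_Icc.exists_bound_of_continuousOn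
    (s := Set.Icc (0:ℝ) (2 * π)) hc₁.continuousOn
  obtain ⟨C₂, hC₂⟩ := isCompact_Icc.exists_bound_of_continuousOn
    (s := Set.Icc (0:ℝ) (2 * π)) hc₂.continuousOn
  have hC₁0 : 0 ≤ C₁ := le_trans (norm_nonneg _) (hC₁ 0 ⟨le_rfl, by positivity⟩)
  have hC₂0 : 0 ≤ C₂ := le_trans (norm_nonneg _) (hC₂ 0 ⟨le_rfl, by positivity⟩)
  have hG₁eq : ∀ q, G₁ q = g₁ (EulerAux.rC q) := fun q => by
    have := hG₁ (EulerAux.rC q); rwa [EulerAux.coe_rC] at this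
  have hG₂eq : ∀ q, G₂ q = g₂ (EulerAux.rC q) := fun q => by
    have := hG₂ (EulerAux.rC q); rwa [EulerAux.coe_rC] at this
  have hG₁m : Measurable G₁ := by
    rw [funext hG₁eq]; exact hc₁.measurable.comp EulerAux.measurable_rC
  have hG₂m : Measurable G₂ := by
    rw [funext hG₂eq]; exact hc₂.measurable.comp EulerAux.measurable_rC
  have hG₁b : ∀ q, |G₁ q| ≤ C₁ := fun q => by
    rw [hG₁eq q]
    have hm := EulerAux.rC_mem q
    simpa [Real.norm_eq_abs] using hC₁ _ ⟨hm.1, hm.2.le⟩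
  have hG₂b : ∀ q, |G₂ q| ≤ C₂ := fun q => by
    rw [hG₂eq q]
    have hm := EulerAux.rC_mem q
    simpa [Real.norm_eq_abs] using hC₂ _ ⟨hm.1, hm.2.le⟩
  have hrCb : ∀ q : Circle2pi, |EulerAux.rC q| ≤ 2 * π := fun q => by
    rw [abs_of_nonneg (EulerAux.rC_mem q).1]; exact (EulerAux.rC_mem q).2.le
  -- zero averages on the circle
  have hz₁' : ∫ q, G₁ q ∂circleMeasure = 0 := by
    rw [EulerAux.integral_circle G₁,
      intervalIntegral.integral_congr (g := g₁) (fun t _ => hG₁ t), hz₁, mul_zero]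
  have hz₂' : ∫ q, G₂ q ∂circleMeasure = 0 := by
    rw [EulerAux.integral_circle G₂,
      intervalIntegral.integral_congr (g := g₂) (fun t _ => hG₂ t), hz₂, mul_zero]
  -- products bounds/measurability on the double and triple products
  have hGGm2 : Measurable (fun q : Circle2pi × Circle2pi => G₁ q.1 * G₂ q.2) :=
    (hG₁m.comp measurable_fst).mul (hG₂m.comp measurable_snd)
  have hGGb2 : ∀ q : Circle2pi × Circle2pi, |G₁ q.1 * G₂ q.2| ≤ C₁ * C₂ := fun q => by
    rw [abs_mul]; exact mul_le_mul (hG₁b _) (hG₂b _) (abs_nonneg _) hC₁0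
  have hGGm3 : Measurable (fun p : Circle2pi × Circle2pi × Circle2pi =>
      G₁ p.2.1 * G₂ p.2.2) :=
    (hG₁m.comp (measurable_fst.comp measurable_snd)).mul
      (hG₂m.comp (measurable_snd.comp measurable_snd))
  have hGGb3 : ∀ p : Circle2pi × Circle2pi × Circle2pi,
      |G₁ p.2.1 * G₂ p.2.2| ≤ C₁ * C₂ := fun p => by
    rw [abs_mul]; exact mul_le_mul (hG₁b _) (hG₂b _) (abs_nonneg _) hC₁0
  have hmulb : ∀ (x y : ℝ), |x| ≤ 2 * π → |y| ≤ C₁ * C₂ → |x * y| ≤ 2 * π * (C₁ * C₂) :=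
    fun x y hx hy => by
      rw [abs_mul]; exact mul_le_mul hx hy (abs_nonneg _) (by positivity)
  -- the inner integral M
  have hM : ∀ z ∈ Set.Icc (0:ℝ) (2 * π),
      (∫ b, EulerAux.rC ((z : Circle2pi) - b) * G₁ b ∂circleMeasure)
        = -(1 / (2 * π)) * (∫ y in (0:ℝ)..(2 * π), y * g₁ y)
          - ∫ s in (0:ℝ)..z, g₁ s := by
    intro z hz
    rw [EulerAux.integral_circle (fun b => EulerAux.rC ((z : Circle2pi) - b) * G₁ b),
      intervalIntegral.integral_congr
        (g := fun y => toIcoMod Real.two_pi_pos 0 (z - y) * g₁ y)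
        (fun y _ => by rw [← AddCircle.coe_sub, hG₁, EulerAux.rC_coe])]
    have hφr : ∀ a b : ℝ,
        IntervalIntegrable (fun y => toIcoMod Real.two_pi_pos 0 (z - y)) volume a b := by
      intro a b
      rw [intervalIntegrable_iff]
      refine MeasureTheory.Measure.integrableOn_of_bounded (M := 2 * π)
        measure_Ioc_lt_top.ne ?_ (Filter.Eventually.of_forall fun y => ?_)
      · exact (EulerAux.measurable_rC.comp
          (AddCircle.measurable_mk'.comp (measurable_const.sub measurable_id))).aestronglyMeasurable
      · rw [Real.norm_eq_abs,
          show toIcoMod Real.two_pi_pos 0 (z - y)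
            = EulerAux.rC (((z - y : ℝ) : Circle2pi)) from rfl]
        exact hrCb _
    have hφ : ∀ a b : ℝ, IntervalIntegrable
        (fun y => toIcoMod Real.two_pi_pos 0 (z - y) * g₁ y) volume a b :=
      fun a b => (hφr a b).mul_continuousOn hc₁.continuousOn
    have hI1 : ∀ a b : ℝ, IntervalIntegrable (fun y => (z - y) * g₁ y) volume a b :=
      fun a b => ((continuous_const.sub continuous_id).mul hc₁).intervalIntegrable a b
    have hI2 : ∀ a b : ℝ, IntervalIntegrable (fun y => 2 * π * g₁ y) volume a b :=
      fun a b => (continuous_const.mul hc₁).intervalIntegrable a b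
    have hI3 : ∀ a b : ℝ, IntervalIntegrable (fun y => z * g₁ y) volume a b :=
      fun a b => (continuous_const.mul hc₁).intervalIntegrable a b
    have hI4 : ∀ a b : ℝ, IntervalIntegrable (fun y => y * g₁ y) volume a b :=
      fun a b => (continuous_id.mul hc₁).intervalIntegrable a b
    have hsplit := intervalIntegral.integral_add_adjacent_intervals (hφ 0 z) (hφ z (2 * π))
    have hp1 : ∫ y in (0:ℝ)..z, toIcoMod Real.two_pi_pos 0 (z - y) * g₁ y
        = ∫ y in (0:ℝ)..z, (z - y) * g₁ y := by
      apply intervalIntegral.integral_congr_ae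
      refine Filter.Eventually.of_forall fun y hy => ?_
      rw [Set.uIoc_of_le hz.1] at hy
      rw [(toIcoMod_eq_self _).mpr
        ⟨by linarith [hy.2], by rw [zero_add]; linarith [hy.1, hz.2]⟩]
    have hp2 : ∫ y in z..(2 * π), toIcoMod Real.two_pi_pos 0 (z - y) * g₁ y
        = ∫ y in z..(2 * π), ((z - y) + 2 * π) * g₁ y := by
      apply intervalIntegral.integral_congr_ae
      refine Filter.Eventually.of_forall fun y hy => ?_
      rw [Set.uIoc_of_le hz.2] at hy
      have : toIcoMod Real.two_pi_pos 0 (z - y) = (z - y) + 2 * π := by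
        rw [← toIcoMod_add_right]
        exact (toIcoMod_eq_self _).mpr
          ⟨by linarith [hy.2, hz.1], by rw [zero_add]; linarith [hy.1]⟩
      rw [this]
    have hp2' : ∫ y in z..(2 * π), ((z - y) + 2 * π) * g₁ y
        = (∫ y in z..(2 * π), (z - y) * g₁ y) + 2 * π * ∫ y in z..(2 * π), g₁ y := by
      rw [intervalIntegral.integral_congr
          (g := fun y => (z - y) * g₁ y + 2 * π * g₁ y) (fun y _ => by ring),
        intervalIntegral.integral_add (hI1 z (2*π)) (hI2 z (2*π)),
        intervalIntegral.integral_const_mul]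
    have hadj : (∫ y in (0:ℝ)..z, (z - y) * g₁ y) + (∫ y in z..(2 * π), (z - y) * g₁ y)
        = ∫ y in (0:ℝ)..(2 * π), (z - y) * g₁ y :=
      intervalIntegral.integral_add_adjacent_intervals (hI1 _ _) (hI1 _ _)
    have hzy : ∫ y in (0:ℝ)..(2 * π), (z - y) * g₁ y
        = - ∫ y in (0:ℝ)..(2 * π), y * g₁ y := by
      rw [intervalIntegral.integral_congr
          (g := fun y => z * g₁ y - y * g₁ y) (fun y _ => by ring),
        intervalIntegral.integral_sub (hI3 0 (2*π)) (hI4 0 (2*π)),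
        intervalIntegral.integral_const_mul, hz₁, mul_zero, zero_sub]
    have htail : ∫ y in z..(2 * π), g₁ y = - ∫ s in (0:ℝ)..z, g₁ s := by
      have := intervalIntegral.integral_add_adjacent_intervals
        (hc₁.intervalIntegrable (μ := volume) 0 z)
        (hc₁.intervalIntegrable (μ := volume) z (2 * π))
      rw [hz₁] at this; linarith
    rw [← hsplit, hp1, hp2, hp2', htail]
    have hfin : (∫ y in (0:ℝ)..z, (z - y) * g₁ y) + (∫ y in z..(2 * π), (z - y) * g₁ y)
        = - ∫ y in (0:ℝ)..(2 * π), y * g₁ y := hadj.trans hzy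
    field_simp
    linear_combination hfin
  -- the main double integral
  have hHint : Integrable
      (fun q : Circle2pi × Circle2pi => EulerAux.rC (q.2 - q.1) * (G₁ q.1 * G₂ q.2))
      (circleMeasure.prod circleMeasure) :=
    EulerAux.integrable_bdd
      ((EulerAux.measurable_rC.comp (measurable_snd.sub measurable_fst)).mul hGGm2)
      (fun q => hmulb _ _ (hrCb _) (hGGb2 _))
  have hJ2 : ∫ q : Circle2pi × Circle2pi,
        EulerAux.rC (q.2 - q.1) * (G₁ q.1 * G₂ q.2) ∂(circleMeasure.prod circleMeasure)
      = -(1 / (2 * π)) * ∫ z in (0 : ℝ)..(2 * π), (∫ s in (0 : ℝ)..z, g₁ s) * g₂ z := by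
    rw [MeasureTheory.integral_prod_symm _ hHint]
    refine Eq.trans (integral_congr_ae
      (g := fun c => G₂ c * ∫ b, EulerAux.rC (c - b) * G₁ b ∂circleMeasure)
      (Filter.Eventually.of_forall fun c => ?_)) ?_
    · show (∫ b, EulerAux.rC (c - b) * (G₁ b * G₂ c) ∂circleMeasure)
        = G₂ c * ∫ b, EulerAux.rC (c - b) * G₁ b ∂circleMeasure
      rw [show (fun b => EulerAux.rC (c - b) * (G₁ b * G₂ c))
          = fun b => G₂ c * (EulerAux.rC (c - b) * G₁ b) from funext fun b => by ring,
        MeasureTheory.integral_const_mul]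
    · rw [EulerAux.integral_circle
        (fun c => G₂ c * ∫ b, EulerAux.rC (c - b) * G₁ b ∂circleMeasure)]
      rw [intervalIntegral.integral_congr
          (g := fun z => (-(1 / (2 * π)) * (∫ y in (0:ℝ)..(2 * π), y * g₁ y)) * g₂ z
            - (∫ s in (0:ℝ)..z, g₁ s) * g₂ z)
          (fun z hzz => ?_)]
      · have hIc : IntervalIntegrable
            (fun z => (-(1 / (2 * π)) * (∫ y in (0:ℝ)..(2 * π), y * g₁ y)) * g₂ z)
            volume 0 (2 * π) := (continuous_const.mul hc₂).intervalIntegrable _ _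
        have hIp : IntervalIntegrable
            (fun z => (∫ s in (0:ℝ)..z, g₁ s) * g₂ z) volume 0 (2 * π) :=
          ((intervalIntegral.continuous_primitive
            (fun _ _ => hc₁.intervalIntegrable _ _) 0).mul hc₂).intervalIntegrable _ _
        rw [intervalIntegral.integral_sub hIc hIp,
          intervalIntegral.integral_const_mul, hz₂, mul_zero, zero_sub]
        ring
      · have hzz' : z ∈ Set.Icc (0:ℝ) (2 * π) := by
          rwa [Set.uIcc_of_le Real.two_pi_pos.le] at hzz
        rw [hG₂ z, hM z hzz']
        ring
  have hνint : Integrable (fun q : Circle2pi × Circle2pi => G₁ q.1 * G₂ q.2)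
      (circleMeasure.prod circleMeasure) := EulerAux.integrable_bdd hGGm2 hGGb2
  have hJ0 : ∫ q : Circle2pi × Circle2pi, G₁ q.1 * G₂ q.2
      ∂(circleMeasure.prod circleMeasure) = 0 := by
    rw [MeasureTheory.integral_prod _ hνint]
    refine Eq.trans (integral_congr_ae (g := fun _ => (0:ℝ))
      (Filter.Eventually.of_forall fun b => ?_)) (integral_zero _ _)
    show (∫ c, G₁ b * G₂ c ∂circleMeasure) = (0 : ℝ)
    rw [MeasureTheory.integral_const_mul, hz₂', mul_zero]
  -- triple-integral versions
  have hJ0t : ∫ p : Circle2pi × Circle2pi × Circle2pi, G₁ p.2.1 * G₂ p.2.2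
      ∂(circleMeasure.prod (circleMeasure.prod circleMeasure)) = 0 :=
    (EulerAux.integral_triple_of_snd (fun q => G₁ q.1 * G₂ q.2) hνint.1).trans hJ0
  have hJ2t : ∫ p : Circle2pi × Circle2pi × Circle2pi,
        EulerAux.rC (p.2.2 - p.2.1) * (G₁ p.2.1 * G₂ p.2.2)
      ∂(circleMeasure.prod (circleMeasure.prod circleMeasure))
      = -(1 / (2 * π)) * ∫ z in (0 : ℝ)..(2 * π), (∫ s in (0 : ℝ)..z, g₁ s) * g₂ z :=
    (EulerAux.integral_triple_of_snd
      (fun q => EulerAux.rC (q.2 - q.1) * (G₁ q.1 * G₂ q.2)) hHint.1).trans hJ2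
  have hf₁int : Integrable (fun p : Circle2pi × Circle2pi × Circle2pi =>
      EulerAux.rC (p.2.1 - p.1) * (G₁ p.2.1 * G₂ p.2.2))
      (circleMeasure.prod (circleMeasure.prod circleMeasure)) :=
    EulerAux.integrable_bdd
      ((EulerAux.measurable_rC.comp
        ((measurable_fst.comp measurable_snd).sub measurable_fst)).mul hGGm3)
      (fun p => hmulb _ _ (hrCb _) (hGGb3 _))
  have hf₂int : Integrable (fun p : Circle2pi × Circle2pi × Circle2pi =>
      EulerAux.rC (p.2.2 - p.2.1) * (G₁ p.2.1 * G₂ p.2.2))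
      (circleMeasure.prod (circleMeasure.prod circleMeasure)) :=
    EulerAux.integrable_bdd
      ((EulerAux.measurable_rC.comp
        ((measurable_snd.comp measurable_snd).sub (measurable_fst.comp measurable_snd))).mul hGGm3)
      (fun p => hmulb _ _ (hrCb _) (hGGb3 _))
  have hf₃int : Integrable (fun p : Circle2pi × Circle2pi × Circle2pi =>
      EulerAux.rC (p.1 - p.2.2) * (G₁ p.2.1 * G₂ p.2.2))
      (circleMeasure.prod (circleMeasure.prod circleMeasure)) :=
    EulerAux.integrable_bdd
      ((EulerAux.measurable_rC.comp
        (measurable_fst.sub (measurable_snd.comp measurable_snd))).mul hGGm3)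
      (fun p => hmulb _ _ (hrCb _) (hGGb3 _))
  have hf₀int : Integrable (fun p : Circle2pi × Circle2pi × Circle2pi =>
      G₁ p.2.1 * G₂ p.2.2)
      (circleMeasure.prod (circleMeasure.prod circleMeasure)) :=
    EulerAux.integrable_bdd hGGm3 hGGb3
  have hJ1t : ∫ p : Circle2pi × Circle2pi × Circle2pi,
        EulerAux.rC (p.2.1 - p.1) * (G₁ p.2.1 * G₂ p.2.2)
      ∂(circleMeasure.prod (circleMeasure.prod circleMeasure)) = 0 := by
    rw [MeasureTheory.integral_prod _ hf₁int]
    refine Eq.trans (integral_congr_ae (g := fun _ => (0:ℝ))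
      (Filter.Eventually.of_forall fun a => ?_)) (integral_zero _ _)
    show (∫ q : Circle2pi × Circle2pi,
        EulerAux.rC (q.1 - a) * (G₁ q.1 * G₂ q.2) ∂(circleMeasure.prod circleMeasure))
      = (0 : ℝ)
    have hsl : Integrable (fun q : Circle2pi × Circle2pi =>
        EulerAux.rC (q.1 - a) * (G₁ q.1 * G₂ q.2)) (circleMeasure.prod circleMeasure) :=
      EulerAux.integrable_bdd
        ((EulerAux.measurable_rC.comp (measurable_fst.sub measurable_const)).mul hGGm2)
        (fun q => hmulb _ _ (hrCb _) (hGGb2 _))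
    rw [MeasureTheory.integral_prod _ hsl]
    refine Eq.trans (integral_congr_ae (g := fun _ => (0:ℝ))
      (Filter.Eventually.of_forall fun b => ?_)) (integral_zero _ _)
    show (∫ c, EulerAux.rC (b - a) * (G₁ b * G₂ c) ∂circleMeasure) = (0 : ℝ)
    rw [show (fun c => EulerAux.rC (b - a) * (G₁ b * G₂ c))
        = fun c => (EulerAux.rC (b - a) * G₁ b) * G₂ c from funext fun c => by ring,
      MeasureTheory.integral_const_mul, hz₂', mul_zero]
  have hJ3t : ∫ p : Circle2pi × Circle2pi × Circle2pi,
        EulerAux.rC (p.1 - p.2.2) * (G₁ p.2.1 * G₂ p.2.2)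
      ∂(circleMeasure.prod (circleMeasure.prod circleMeasure)) = 0 := by
    rw [MeasureTheory.integral_prod _ hf₃int]
    refine Eq.trans (integral_congr_ae (g := fun _ => (0:ℝ))
      (Filter.Eventually.of_forall fun a => ?_)) (integral_zero _ _)
    show (∫ q : Circle2pi × Circle2pi,
        EulerAux.rC (a - q.2) * (G₁ q.1 * G₂ q.2) ∂(circleMeasure.prod circleMeasure))
      = (0 : ℝ)
    have hsl : Integrable (fun q : Circle2pi × Circle2pi =>
        EulerAux.rC (a - q.2) * (G₁ q.1 * G₂ q.2)) (circleMeasure.prod circleMeasure) :=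
      EulerAux.integrable_bdd
        ((EulerAux.measurable_rC.comp (measurable_const.sub measurable_snd)).mul hGGm2)
        (fun q => hmulb _ _ (hrCb _) (hGGb2 _))
    rw [MeasureTheory.integral_prod_symm _ hsl]
    refine Eq.trans (integral_congr_ae (g := fun _ => (0:ℝ))
      (Filter.Eventually.of_forall fun c => ?_)) (integral_zero _ _)
    show (∫ b, EulerAux.rC (a - c) * (G₁ b * G₂ c) ∂circleMeasure) = (0 : ℝ)
    rw [show (fun b => EulerAux.rC (a - c) * (G₁ b * G₂ c))
        = fun b => (EulerAux.rC (a - c) * G₂ c) * G₁ b from funext fun b => by ring,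
      MeasureTheory.integral_const_mul, hz₁', mul_zero]
  -- a.e. replacement of the cocycle
  have hae : (fun p : Circle2pi × Circle2pi × Circle2pi =>
        eCocycle p.1 p.2.1 p.2.2 * G₁ p.2.1 * G₂ p.2.2)
      =ᵐ[circleMeasure.prod (circleMeasure.prod circleMeasure)]
      (fun p => 3 * (G₁ p.2.1 * G₂ p.2.2)
        - (1 / π) * (EulerAux.rC (p.2.1 - p.1) * (G₁ p.2.1 * G₂ p.2.2))
        - (1 / π) * (EulerAux.rC (p.2.2 - p.2.1) * (G₁ p.2.1 * G₂ p.2.2))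
        - (1 / π) * (EulerAux.rC (p.1 - p.2.2) * (G₁ p.2.1 * G₂ p.2.2))) := by
    refine (MeasureTheory.measure_eq_zero_iff_ae_notMem.mp EulerAux.null_deg).mono fun p hp => ?_
    simp only [Set.mem_setOf_eq, not_or] at hp
    obtain ⟨h1, h2, h3⟩ := hp
    show eCocycle p.1 p.2.1 p.2.2 * G₁ p.2.1 * G₂ p.2.2
      = 3 * (G₁ p.2.1 * G₂ p.2.2)
        - (1 / π) * (EulerAux.rC (p.2.1 - p.1) * (G₁ p.2.1 * G₂ p.2.2))
        - (1 / π) * (EulerAux.rC (p.2.2 - p.2.1) * (G₁ p.2.1 * G₂ p.2.2))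
        - (1 / π) * (EulerAux.rC (p.1 - p.2.2) * (G₁ p.2.1 * G₂ p.2.2))
    rw [EulerAux.eCocycle_eq h1 h2 h3]
    field_simp
    ring
  refine (integral_congr_ae hae).trans ?_
  have hint₀ : Integrable (fun p : Circle2pi × Circle2pi × Circle2pi =>
      3 * (G₁ p.2.1 * G₂ p.2.2))
      (circleMeasure.prod (circleMeasure.prod circleMeasure)) := hf₀int.const_mul 3
  have hint₁ : Integrable (fun p : Circle2pi × Circle2pi × Circle2pi =>
      (1 / π) * (EulerAux.rC (p.2.1 - p.1) * (G₁ p.2.1 * G₂ p.2.2)))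
      (circleMeasure.prod (circleMeasure.prod circleMeasure)) := hf₁int.const_mul (1 / π)
  have hint₂ : Integrable (fun p : Circle2pi × Circle2pi × Circle2pi =>
      (1 / π) * (EulerAux.rC (p.2.2 - p.2.1) * (G₁ p.2.1 * G₂ p.2.2)))
      (circleMeasure.prod (circleMeasure.prod circleMeasure)) := hf₂int.const_mul (1 / π)
  have hint₃ : Integrable (fun p : Circle2pi × Circle2pi × Circle2pi =>
      (1 / π) * (EulerAux.rC (p.1 - p.2.2) * (G₁ p.2.1 * G₂ p.2.2)))
      (circleMeasure.prod (circleMeasure.prod circleMeasure)) := hf₃int.const_mul (1 / π)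
  have hintA : Integrable (fun p : Circle2pi × Circle2pi × Circle2pi =>
      3 * (G₁ p.2.1 * G₂ p.2.2)
        - (1 / π) * (EulerAux.rC (p.2.1 - p.1) * (G₁ p.2.1 * G₂ p.2.2)))
      (circleMeasure.prod (circleMeasure.prod circleMeasure)) := hint₀.sub hint₁
  have hintB : Integrable (fun p : Circle2pi × Circle2pi × Circle2pi =>
      3 * (G₁ p.2.1 * G₂ p.2.2)
        - (1 / π) * (EulerAux.rC (p.2.1 - p.1) * (G₁ p.2.1 * G₂ p.2.2))
        - (1 / π) * (EulerAux.rC (p.2.2 - p.2.1) * (G₁ p.2.1 * G₂ p.2.2)))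
      (circleMeasure.prod (circleMeasure.prod circleMeasure)) := hintA.sub hint₂
  rw [MeasureTheory.integral_sub hintB hint₃,
    MeasureTheory.integral_sub hintA hint₂,
    MeasureTheory.integral_sub hint₀ hint₁,
    MeasureTheory.integral_const_mul, MeasureTheory.integral_const_mul,
    MeasureTheory.integral_const_mul, MeasureTheory.integral_const_mul,
    hJ0t, hJ1t, hJ2t, hJ3t, key2, hval2,
    show (1:ℝ) / (2 * π ^ 2) = 1 / π * (1 / (2 * π)) from by field_simp]
  ring
end
end

section
/- Let D = {x ∈ ℂ : |x| < 1} be the open unit disc and define Φ : D → L²(S¹, ℝ) by Φ(x) = (θ ↦ √((1 − |x|²)/|x − e^{iθ}|²)), where for each x ∈ D this function of θ is square-integrable on S¹. Then Φ(0) is the constant function 1, and Φ is Fréchet-differentiable at 0 (as a map from ℂ ≅ ℝ² to the Banach space L²(S¹, ℝ)) with derivative DΦ(0) given by DΦ(0)(u) = (θ ↦ (Re u) cos θ + (Im u) sin θ) for u ∈ ℂ. In particular, the tangent space at the constant function 1 of the image of the Poisson-kernel embedding is spanned by the functions θ ↦ cos θ and θ ↦ sin θ. -/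
open MeasureTheory Real
open scoped Real ENNReal NNReal

set_option maxHeartbeats 1000000

noncomputable section

lemma key_abs (R t g : ℝ) (hR0 : 0 ≤ R) (hRle : R ≤ 1/4) (ht2 : t^2 ≤ R)
    (hg0 : 0 ≤ g) (hgsq : g^2 = (1 - R)/(1 - 2*t + R)) : |g - (1+t)| ≤ 64 * R := by
  have htle : t ≤ 1/2 := by nlinarith
  have htge : -(1/2) ≤ t := by nlinarith
  have hD4 : (1:ℝ)/4 ≤ 1 - 2*t + R := by nlinarith
  have hDpos : (0:ℝ) < 1 - 2*t + R := by linarith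
  have hN : g^2 - (1+t)^2 = (-2*R + 3*t^2 - 2*t*R + 2*t^3 - t^2*R) / (1 - 2*t + R) := by
    rw [hgsq]; field_simp; ring
  have hNabs : |g^2 - (1+t)^2| ≤ 32 * R := by
    rw [hN, abs_div, abs_of_pos hDpos, div_le_iff₀ hDpos]
    have h8 : |(-2*R + 3*t^2 - 2*t*R + 2*t^3 - t^2*R)| ≤ 8 * R := by
      rw [abs_le]; constructor <;> nlinarith
    nlinarith
  have hsum : (1:ℝ)/2 ≤ g + (1+t) := by nlinarith
  have hfac : |g - (1+t)| * (g + (1+t)) = |g^2 - (1+t)^2| := by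
    rw [← abs_of_nonneg (by linarith : (0:ℝ) ≤ g + (1+t)), ← abs_mul]
    congr 1; ring
  nlinarith [abs_nonneg (g - (1+t)), mul_le_mul_of_nonneg_left hsum (abs_nonneg (g - (1+t)))]

lemma key_est (a b c s : ℝ) (h1 : c^2 + s^2 = 1) (hr : a^2 + b^2 ≤ 1/4) :
    |Real.sqrt ((1 - (a^2+b^2)) / ((a-c)^2 + (b-s)^2)) - (1 + (a*c + b*s))| ≤ 64 * (a^2+b^2) := by
  have hR0 : (0:ℝ) ≤ a^2 + b^2 := by positivity
  have ht2 : (a*c+b*s)^2 ≤ a^2 + b^2 := by nlinarith [sq_nonneg (a*s - b*c)]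
  have hD : (a-c)^2 + (b-s)^2 = 1 - 2*(a*c+b*s) + (a^2+b^2) := by nlinarith
  have hDpos : (0:ℝ) < 1 - 2*(a*c+b*s) + (a^2+b^2) := by nlinarith
  refine key_abs _ _ _ hR0 hr ht2 (Real.sqrt_nonneg _) ?_
  rw [hD, sq_sqrt]
  · exact div_nonneg (by nlinarith) hDpos.le

lemma memLp_cos : MemLp (fun θ : Circle2pi => Real.Angle.cos θ) 2 circleMeasure := by
  have hcont : Continuous fun θ : Circle2pi => Real.Angle.cos θ := Real.Angle.continuous_cos
  refine MemLp.of_bound hcont.aestronglyMeasurable 1 ?_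
  filter_upwards with θ
  rw [Real.norm_eq_abs]
  induction θ using Real.Angle.induction_on
  rw [Real.Angle.cos_coe]
  exact Real.abs_cos_le_one _

lemma memLp_sin : MemLp (fun θ : Circle2pi => Real.Angle.sin θ) 2 circleMeasure := by
  have hcont : Continuous fun θ : Circle2pi => Real.Angle.sin θ := Real.Angle.continuous_sin
  refine MemLp.of_bound hcont.aestronglyMeasurable 1 ?_
  filter_upwards with θ
  rw [Real.norm_eq_abs]
  induction θ using Real.Angle.induction_on
  rw [Real.Angle.sin_coe]
  exact Real.abs_sin_le_one _


/-- the Poisson-kernel embedding of the disc into `L²(S¹,ℝ)` sends `0`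
to the constant function `1` and is Fréchet-differentiable at `0`, with derivative
`u ↦ (θ ↦ Re u · cos θ + Im u · sin θ)`. -/
theorem poisson_embedding_tangent_at_one (Φ : ℂ → Lp ℝ 2 circleMeasure)
    (hΦ : ∀ x : ℂ, ‖x‖ < 1 →
      (Φ x : Circle2pi → ℝ) =ᵐ[circleMeasure] fun θ : Circle2pi =>
        Real.sqrt ((1 - ‖x‖ ^ 2) /
          ‖x - (Real.Angle.toCircle θ : ℂ)‖ ^ 2)) :
    ((Φ 0 : Circle2pi → ℝ) =ᵐ[circleMeasure] fun _ => 1) ∧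
    ∃ L : ℂ →L[ℝ] Lp ℝ 2 circleMeasure, HasFDerivAt Φ L 0 ∧
      ∀ u : ℂ, (L u : Circle2pi → ℝ) =ᵐ[circleMeasure]
        fun θ : Circle2pi => u.re * Real.Angle.cos θ + u.im * Real.Angle.sin θ := by
  have h0 : (Φ 0 : Circle2pi → ℝ) =ᵐ[circleMeasure] fun _ => 1 := by
    filter_upwards [hΦ 0 (by simp)] with θ hθ
    rw [hθ]
    simp [Circle.norm_coe]
  refine ⟨h0, ?_⟩
  set C0 : Lp ℝ 2 circleMeasure := memLp_cos.toLp _ with hC0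
  set S0 : Lp ℝ 2 circleMeasure := memLp_sin.toLp _ with hS0
  set L : ℂ →L[ℝ] Lp ℝ 2 circleMeasure :=
    Complex.reCLM.smulRight C0 + Complex.imCLM.smulRight S0 with hLdef
  have hL : ∀ u : ℂ, (L u : Circle2pi → ℝ) =ᵐ[circleMeasure]
      fun θ : Circle2pi => u.re * Real.Angle.cos θ + u.im * Real.Angle.sin θ := by
    intro u
    have h1 : (L u : Circle2pi → ℝ) =ᵐ[circleMeasure]
        fun θ => (u.re • C0 : Lp ℝ 2 circleMeasure) θ + (u.im • S0 : Lp ℝ 2 circleMeasure) θ :=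
      Lp.coeFn_add _ _
    filter_upwards [h1, Lp.coeFn_smul u.re C0, Lp.coeFn_smul u.im S0,
      memLp_cos.coeFn_toLp, memLp_sin.coeFn_toLp] with θ e1 e2 e3 e4 e5
    rw [e1, e2, e3]
    simp only [Pi.smul_apply, smul_eq_mul]
    rw [← hC0] at e4
    rw [← hS0] at e5
    rw [e4, e5]
  refine ⟨L, ?_, hL⟩
  rw [hasFDerivAt_iff_isLittleO_nhds_zero]
  simp only [zero_add]
  rw [Asymptotics.isLittleO_iff]
  intro c hc
  have hδ : 0 < min (1/2) (c/64) := lt_min (by norm_num) (by positivity)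
  rw [Metric.eventually_nhds_iff]
  refine ⟨min (1/2) (c/64), hδ, fun {x} hx => ?_⟩
  rw [dist_zero_right] at hx
  have hx2 : ‖x‖ ≤ 1/2 := (hx.trans_le (min_le_left _ _)).le
  have hxc : ‖x‖ ≤ c/64 := (hx.trans_le (min_le_right _ _)).le
  have hxlt1 : ‖x‖ < 1 := by
    linarith
  -- pointwise a.e. bound
  have hae : ∀ᵐ θ ∂circleMeasure,
      ‖(Φ x - Φ 0 - L x : Lp ℝ 2 circleMeasure) θ‖ ≤ c * ‖x‖ := by
    have hsub1 : (Φ x - Φ 0 - L x : Lp ℝ 2 circleMeasure) =ᵐ[circleMeasure]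
        fun θ => (Φ x - Φ 0 : Lp ℝ 2 circleMeasure) θ - (L x) θ := Lp.coeFn_sub _ _
    filter_upwards [hsub1, Lp.coeFn_sub (Φ x) (Φ 0), hΦ x hxlt1, h0, hL x]
      with θ e1 e2 e3 e4 e5
    rw [e1, e2, Pi.sub_apply, e3, e4, e5]
    have hcs : (Real.Angle.cos θ)^2 + (Real.Angle.sin θ)^2 = 1 := Real.Angle.cos_sq_add_sin_sq θ
    have habs : ‖x‖ ^ 2 = x.re^2 + x.im^2 := by
      rw [Complex.sq_norm, Complex.normSq_apply]; ring
    have habs2 : ‖x - (Real.Angle.toCircle θ : ℂ)‖ ^ 2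
        = (x.re - Real.Angle.cos θ)^2 + (x.im - Real.Angle.sin θ)^2 := by
      rw [Complex.sq_norm, Complex.normSq_apply, Real.Angle.coe_toCircle (θ := (θ : Real.Angle))]
      simp [Complex.sub_re, Complex.sub_im]
      ring
    have hr : x.re^2 + x.im^2 ≤ 1/4 := by
      have : ‖x‖^2 ≤ (1/2)^2 := by
        apply sq_le_sq' _ hx2; linarith [norm_nonneg x]
      rw [← habs]; linarith [this]
    have hkey := key_est x.re x.im (Real.Angle.cos θ) (Real.Angle.sin θ) hcs hr
    rw [← habs, ← habs2] at hkey
    have heq : Real.sqrt ((1 - ‖x‖ ^ 2) / ‖x - (Real.Angle.toCircle θ : ℂ)‖ ^ 2)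
        - 1 - (x.re * Real.Angle.cos θ + x.im * Real.Angle.sin θ)
        = Real.sqrt ((1 - ‖x‖ ^ 2) / ‖x - (Real.Angle.toCircle θ : ℂ)‖ ^ 2)
        - (1 + (x.re * Real.Angle.cos θ + x.im * Real.Angle.sin θ)) := by ring
    rw [Real.norm_eq_abs, heq]
    refine hkey.trans ?_
    have hnx : x.re^2 + x.im^2 = ‖x‖^2 := by
      rw [habs]
    rw [habs, hnx]
    have gen : ∀ y C : ℝ, 0 ≤ y → y ≤ C/64 → 64 * y^2 ≤ C * y := by
      intro y C hy hyc; nlinarith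
    exact gen ‖x‖ c (norm_nonneg x) hxc
  have := Lp.norm_le_of_ae_bound (f := (Φ x - Φ 0 - L x : Lp ℝ 2 circleMeasure))
    (C := c * ‖x‖) (by positivity) hae
  have huniv : measureUnivNNReal circleMeasure = 1 := by
    simp [measureUnivNNReal, measure_univ]
  rw [show ((measureUnivNNReal circleMeasure : ℝ) ^ (2 : ℝ≥0∞).toReal⁻¹ * (c * ‖x‖))
      = c * ‖x‖ by rw [huniv]; simp] at this
  linarith [this]
end
end
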